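/- arXiv:1612.00908 — 4 statements merged into one kernel-verified Lean document; each statement's English description precedes it below -/
import Mathlib

section
/- Tail bound lemma (axiomatic form). For every real ε > 0, real constant C' > 0 and natural numbers d ≥ 1 and s ≥ 1 there exists a real constant C such that the following holds. Let X be a set, H a finite set with |H| = n ≥ 1, for each a ∈ H let A_a ⊆ X, and let (T, I_H) be an abstract cell decomposition scheme for (H, (A_a)_{a ∈ H}) with parameters (C', d, s). Let r be a real number with 1 ≤ r ≤ (1−ε)·n, let μ be the Bernoulli(r/n) distribution on subsets of H, and let t ≥ 0 be a real number. Writing T(S)_{≥t} = {Δ ∈ T(S) : |I_H(Δ)| ≥ t·n/r}, one has Σ_{S ⊆ H} μ(S)·|T(S)_{≥t}| ≤ C·2^{−t}·r^d. -/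
open scoped Classical

private lemma binom_sum {α : Type} (M : Finset α) (x y : ℝ) :
    ∑ S ∈ M.powerset, x ^ S.card * y ^ (M.card - S.card) = (x + y) ^ M.card := by
  classical
  have h := Finset.prod_add (fun _ : α => x) (fun _ : α => y) M
  simp only [Finset.prod_const] at h
  rw [h]
  refine Finset.sum_congr rfl fun S hS => ?_
  rw [Finset.mem_powerset] at hS
  rw [Finset.card_sdiff_of_subset hS]

private lemma supset_sum {α : Type} (K W : Finset α) (hWK : W ⊆ K) (a b e : ℝ) :
    ∑ S ∈ K.powerset.filter (fun S => W ⊆ S),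
        a ^ S.card * b ^ (K.card - S.card) * e ^ (S.card - W.card)
      = a ^ W.card * (a * e + b) ^ (K.card - W.card) := by
  classical
  rw [Finset.sum_nbij' (i := fun S => S \ W) (j := fun V => V ∪ W)
    (t := (K \ W).powerset)
    (g := fun V => a ^ W.card * ((a * e) ^ V.card * b ^ ((K \ W).card - V.card)))]
  · rw [← Finset.mul_sum, binom_sum, Finset.card_sdiff_of_subset hWK]
  · intro S hS
    simp only [Finset.mem_filter, Finset.mem_powerset] at hS ⊢
    exact Finset.sdiff_subset_sdiff hS.1 (le_refl _)
  · intro V hV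
    simp only [Finset.mem_powerset] at hV
    simp only [Finset.mem_filter, Finset.mem_powerset]
    constructor
    · exact Finset.union_subset (hV.trans (Finset.sdiff_subset)) hWK
    · exact Finset.subset_union_right
  · intro S hS
    simp only [Finset.mem_filter, Finset.mem_powerset] at hS
    exact Finset.sdiff_union_of_subset hS.2
  · intro V hV
    simp only [Finset.mem_powerset] at hV
    have hd : Disjoint V W := Finset.disjoint_of_subset_left hV Finset.sdiff_disjoint
    rw [Finset.union_sdiff_cancel_right hd]
  · intro S hS
    simp only [Finset.mem_filter, Finset.mem_powerset] at hS
    have h1 : (S \ W).card = S.card - W.card := Finset.card_sdiff_of_subset hS.2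
    have hWS : W.card ≤ S.card := Finset.card_le_card hS.2
    have hSK : S.card ≤ K.card := Finset.card_le_card hS.1
    rw [h1, Finset.card_sdiff_of_subset hWK]
    have h2 : S.card = W.card + (S.card - W.card) := by omega
    have h3 : K.card - W.card - (S.card - W.card) = K.card - S.card := by omega
    rw [h3]
    rw [mul_pow]
    calc a ^ S.card * b ^ (K.card - S.card) * e ^ (S.card - W.card)
        = a ^ (W.card + (S.card - W.card)) * b ^ (K.card - S.card) * e ^ (S.card - W.card) := by
          rw [← h2]
      _ = a ^ W.card * (a ^ (S.card - W.card) * e ^ (S.card - W.card) * b ^ (K.card - S.card)) := by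
          rw [pow_add]; ring

private lemma powerset_union_sum {α : Type} {J K : Finset α} (hJK : Disjoint J K)
    (F : Finset α → ℝ) :
    ∑ S ∈ (J ∪ K).powerset, F S
      = ∑ A ∈ J.powerset, ∑ B ∈ K.powerset, F (A ∪ B) := by
  classical
  rw [← Finset.sum_product']
  have key : ∀ z : Finset α × Finset α, z.1 ⊆ J → z.2 ⊆ K →
      (z.1 ∪ z.2) ∩ J = z.1 ∧ (z.1 ∪ z.2) ∩ K = z.2 := by
    intro z h1 h2
    constructor
    · ext x
      simp only [Finset.mem_inter, Finset.mem_union]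
      constructor
      · rintro ⟨h | h, hJ⟩
        · exact h
        · exact absurd hJ (Finset.disjoint_right.mp hJK (h2 h))
      · intro h; exact ⟨Or.inl h, h1 h⟩
    · ext x
      simp only [Finset.mem_inter, Finset.mem_union]
      constructor
      · rintro ⟨h | h, hK⟩
        · exact absurd hK (Finset.disjoint_left.mp hJK (h1 h))
        · exact h
      · intro h; exact ⟨Or.inr h, h2 h⟩
  have key2 : ∀ S : Finset α, S ⊆ J ∪ K → S ∩ J ∪ S ∩ K = S := by
    intro S hS
    rw [← Finset.inter_union_distrib_left]
    exact Finset.inter_eq_left.mpr hS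
  apply Finset.sum_nbij' (i := fun S => (S ∩ J, S ∩ K)) (j := fun z => z.1 ∪ z.2)
  · intro S hS
    simp only [Finset.mem_product, Finset.mem_powerset]
    exact ⟨Finset.inter_subset_right, Finset.inter_subset_right⟩
  · intro z hz
    simp only [Finset.mem_product, Finset.mem_powerset] at hz
    simp only [Finset.mem_powerset]
    exact Finset.union_subset (hz.1.trans Finset.subset_union_left)
      (hz.2.trans Finset.subset_union_right)
  · intro S hS
    exact key2 S (Finset.mem_powerset.mp hS)
  · intro z hz
    simp only [Finset.mem_product, Finset.mem_powerset] at hz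
    obtain ⟨e1, e2⟩ := key z hz.1 hz.2
    simp only [e1, e2]
  · intro S hS
    rw [key2 S (Finset.mem_powerset.mp hS)]

private lemma sum_subsets_swap {α : Type} (K : Finset α) (h : Finset α → Finset α → ℝ) :
    ∑ R ∈ K.powerset, ∑ U ∈ K.powerset.filter (fun U => R ⊆ U), h R U
      = ∑ U ∈ K.powerset, ∑ R ∈ U.powerset, h R U := by
  classical
  simp_rw [Finset.sum_filter]
  rw [Finset.sum_comm]
  refine Finset.sum_congr rfl fun U hU => ?_
  rw [Finset.mem_powerset] at hU
  rw [← Finset.sum_filter]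
  apply Finset.sum_congr ?_ (fun _ _ => rfl)
  ext R
  simp only [Finset.mem_filter, Finset.mem_powerset]
  exact ⟨fun hh => hh.2, fun hh => ⟨hh.trans hU, hh⟩⟩

-- Claim A
private lemma phi_mono {α : Type} (K : Finset α) (p : ℝ) (hp0 : 0 ≤ p) (hp1 : p ≤ 1)
    (s : ℕ) (Q : Finset α → Prop) [DecidablePred Q]
    (Qmono : ∀ ⦃W R : Finset α⦄, W ⊆ R → Q W → Q R)
    (Qwit : ∀ ⦃U : Finset α⦄, Q U → ∃ W, W ⊆ U ∧ W.card ≤ s ∧ Q W) :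
    ∑ R ∈ K.powerset, (if Q R then p ^ R.card * (1 - p) ^ (K.card - R.card) else 0)
      ≤ 4 ^ s * ∑ R ∈ K.powerset,
          (if Q R then (p / 4) ^ R.card * (1 - p / 4) ^ (K.card - R.card) else 0) := by
  classical
  -- thinning identity
  have thin : ∀ R ∈ K.powerset,
      (p / 4) ^ R.card * (1 - p / 4) ^ (K.card - R.card)
        = ∑ U ∈ K.powerset.filter (fun U => R ⊆ U),
            p ^ U.card * (1 - p) ^ (K.card - U.card) *
              ((1 / 4 : ℝ) ^ R.card * (3 / 4 : ℝ) ^ (U.card - R.card)) := by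
    intro R hR
    rw [Finset.mem_powerset] at hR
    have h := supset_sum K R hR p (1 - p) (3 / 4)
    have e1 : ∀ U : Finset α,
        p ^ U.card * (1 - p) ^ (K.card - U.card) *
            ((1 / 4 : ℝ) ^ R.card * (3 / 4 : ℝ) ^ (U.card - R.card))
          = (1 / 4 : ℝ) ^ R.card *
            (p ^ U.card * (1 - p) ^ (K.card - U.card) * (3 / 4 : ℝ) ^ (U.card - R.card)) := by
      intro U; ring
    simp only [e1]
    rw [← Finset.mul_sum, h]
    have : p * (3 / 4) + (1 - p) = 1 - p / 4 := by ring
    rw [this]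
    rw [← mul_assoc, ← mul_pow]
    have e4 : (1 / 4 : ℝ) * p = p / 4 := by ring
    rw [e4]
  calc ∑ R ∈ K.powerset, (if Q R then p ^ R.card * (1 - p) ^ (K.card - R.card) else 0)
      = 4 ^ s * ((1 / 4 : ℝ) ^ s *
          ∑ R ∈ K.powerset, (if Q R then p ^ R.card * (1 - p) ^ (K.card - R.card) else 0)) := by
        rw [← mul_assoc, ← mul_pow]; norm_num
    _ ≤ 4 ^ s * ∑ R ∈ K.powerset,
          (if Q R then (p / 4) ^ R.card * (1 - p / 4) ^ (K.card - R.card) else 0) := by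
        apply mul_le_mul_of_nonneg_left ?_ (by positivity)
        -- rewrite RHS via thinning and swap
        have step : ∑ R ∈ K.powerset,
            (if Q R then (p / 4) ^ R.card * (1 - p / 4) ^ (K.card - R.card) else 0)
            = ∑ U ∈ K.powerset, p ^ U.card * (1 - p) ^ (K.card - U.card) *
                ∑ R ∈ U.powerset,
                  (if Q R then (1 / 4 : ℝ) ^ R.card * (3 / 4 : ℝ) ^ (U.card - R.card) else 0) := by
          have e2 : ∀ R ∈ K.powerset,
              (if Q R then (p / 4) ^ R.card * (1 - p / 4) ^ (K.card - R.card) else 0)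
              = ∑ U ∈ K.powerset.filter (fun U => R ⊆ U),
                  (if Q R then p ^ U.card * (1 - p) ^ (K.card - U.card) *
                    ((1 / 4 : ℝ) ^ R.card * (3 / 4 : ℝ) ^ (U.card - R.card)) else 0) := by
            intro R hR
            by_cases hQ : Q R
            · simp only [hQ, if_true]; exact thin R hR
            · simp [hQ]
          rw [Finset.sum_congr rfl e2, sum_subsets_swap]
          refine Finset.sum_congr rfl fun U hU => ?_
          rw [Finset.mul_sum]
          refine Finset.sum_congr rfl fun R hR => ?_
          by_cases hQ : Q R <;> simp [hQ, mul_comm]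
        rw [step]
        -- pointwise lower bound
        have pointwise : ∀ U ∈ K.powerset,
            (if Q U then p ^ U.card * (1 - p) ^ (K.card - U.card) *
                ((1 / 4 : ℝ) ^ s) else 0)
            ≤ p ^ U.card * (1 - p) ^ (K.card - U.card) *
                ∑ R ∈ U.powerset,
                  (if Q R then (1 / 4 : ℝ) ^ R.card * (3 / 4 : ℝ) ^ (U.card - R.card) else 0) := by
          intro U hU
          have h1p : (0:ℝ) ≤ 1 - p := by linarith
          have hw : (0:ℝ) ≤ p ^ U.card * (1 - p) ^ (K.card - U.card) :=
            mul_nonneg (pow_nonneg hp0 _) (pow_nonneg h1p _)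
          by_cases hQ : Q U
          · simp only [hQ, if_true]
            apply mul_le_mul_of_nonneg_left ?_ hw
            obtain ⟨W, hWU, hWs, hQW⟩ := Qwit hQ
            have lower : ((1:ℝ)/4) ^ W.card *
                  ((1/4 : ℝ) * 1 + 3/4) ^ (U.card - W.card)
                ≤ ∑ R ∈ U.powerset,
                  (if Q R then (1 / 4 : ℝ) ^ R.card * (3 / 4 : ℝ) ^ (U.card - R.card) else 0) := by
              rw [← supset_sum U W hWU (1/4) (3/4) 1]
              rw [← Finset.sum_filter_add_sum_filter_not U.powerset (fun S => W ⊆ S)]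
              have t1 : ∑ S ∈ U.powerset.filter (fun S => W ⊆ S),
                  (1/4 : ℝ) ^ S.card * (3/4 : ℝ) ^ (U.card - S.card) * 1 ^ (S.card - W.card)
                ≤ ∑ S ∈ U.powerset.filter (fun S => W ⊆ S),
                  (if Q S then (1 / 4 : ℝ) ^ S.card * (3 / 4 : ℝ) ^ (U.card - S.card) else 0) := by
                apply Finset.sum_le_sum
                intro S hS
                rw [Finset.mem_filter] at hS
                rw [if_pos (Qmono hS.2 hQW), one_pow, mul_one]
              have t2 : (0:ℝ) ≤ ∑ S ∈ U.powerset.filter (fun S => ¬ W ⊆ S),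
                  (if Q S then (1 / 4 : ℝ) ^ S.card * (3 / 4 : ℝ) ^ (U.card - S.card) else 0) := by
                apply Finset.sum_nonneg; intro S _; positivity
              calc _ ≤ _ := t1
                _ ≤ _ := le_add_of_nonneg_right t2
            refine le_trans ?_ lower
            norm_num
            apply pow_le_pow_of_le_one (by norm_num) (by norm_num) hWs
          · simp only [hQ, if_false]
            apply mul_nonneg hw
            apply Finset.sum_nonneg; intro R _; positivity
        calc (1/4:ℝ) ^ s * ∑ R ∈ K.powerset,
              (if Q R then p ^ R.card * (1 - p) ^ (K.card - R.card) else 0)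
            = ∑ U ∈ K.powerset, (if Q U then p ^ U.card * (1 - p) ^ (K.card - U.card) *
                ((1 / 4 : ℝ) ^ s) else 0) := by
              rw [Finset.mul_sum]
              refine Finset.sum_congr rfl fun U hU => ?_
              by_cases hQ : Q U <;> simp [hQ] <;> ring
          _ ≤ _ := Finset.sum_le_sum pointwise

-- pointwise nat moment bound
private lemma nat_moment (m d : ℕ) :
    (m : ℝ) ^ d ≤ 2 ^ d * (d.factorial : ℝ) * (m.choose d : ℝ) + (2 * d : ℝ) ^ d := by
  have key : m ^ d ≤ 2 ^ d * (d.factorial * m.choose d) + (2 * d) ^ d := by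
    rcases lt_or_ge m (2 * d) with h | h
    · calc m ^ d ≤ (2 * d) ^ d := Nat.pow_le_pow_left (le_of_lt h) d
        _ ≤ 2 ^ d * (d.factorial * m.choose d) + (2 * d) ^ d := Nat.le_add_left _ _
    · have h1 : m ^ d ≤ 2 ^ d * (m + 1 - d) ^ d := by
        rw [← Nat.mul_pow]
        apply Nat.pow_le_pow_left
        omega
      have h2 : (m + 1 - d) ^ d ≤ m.descFactorial d := Nat.pow_sub_le_descFactorial m d
      have h3 : m.descFactorial d = d.factorial * m.choose d :=
        Nat.descFactorial_eq_factorial_mul_choose m d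
      calc m ^ d ≤ 2 ^ d * (m + 1 - d) ^ d := h1
        _ ≤ 2 ^ d * (d.factorial * m.choose d) := by
            rw [← h3]; exact Nat.mul_le_mul_left _ h2
        _ ≤ _ := Nat.le_add_right _ _
  calc (m : ℝ) ^ d = ((m ^ d : ℕ) : ℝ) := by push_cast; ring
    _ ≤ ((2 ^ d * (d.factorial * m.choose d) + (2 * d) ^ d : ℕ) : ℝ) := by
        exact_mod_cast key
    _ = 2 ^ d * (d.factorial : ℝ) * (m.choose d : ℝ) + (2 * d : ℝ) ^ d := by
        push_cast; ring

-- choose moment identity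
private lemma choose_moment {α : Type} (K : Finset α) (q : ℝ) (d : ℕ) :
    ∑ S ∈ K.powerset, q ^ S.card * (1 - q) ^ (K.card - S.card) * (S.card.choose d : ℝ)
      = (K.card.choose d : ℝ) * q ^ d := by
  classical
  have e1 : ∀ S ∈ K.powerset,
      q ^ S.card * (1 - q) ^ (K.card - S.card) * (S.card.choose d : ℝ)
        = ∑ W ∈ K.powersetCard d, (if W ⊆ S then
            q ^ S.card * (1 - q) ^ (K.card - S.card) else 0) := by
    intro S hS
    rw [Finset.mem_powerset] at hS
    rw [Finset.sum_ite, Finset.sum_const_zero, add_zero, Finset.sum_const, nsmul_eq_mul]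
    have : (K.powersetCard d).filter (fun W => W ⊆ S) = S.powersetCard d := by
      ext W
      simp only [Finset.mem_filter, Finset.mem_powersetCard]
      exact ⟨fun h => ⟨h.2, h.1.2⟩, fun h => ⟨⟨h.1.trans hS, h.2⟩, h.1⟩⟩
    rw [this, Finset.card_powersetCard]
    ring
  rw [Finset.sum_congr rfl e1, Finset.sum_comm]
  have e2 : ∀ W ∈ K.powersetCard d,
      ∑ S ∈ K.powerset, (if W ⊆ S then q ^ S.card * (1 - q) ^ (K.card - S.card) else 0)
        = q ^ d := by
    intro W hW
    rw [Finset.mem_powersetCard] at hW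
    rw [← Finset.sum_filter]
    have h := supset_sum K W hW.1 q (1 - q) 1
    simp only [one_pow, mul_one] at h
    have e3 : ∀ S : Finset α, q ^ S.card * (1 - q) ^ (K.card - S.card)
        = q ^ S.card * (1 - q) ^ (K.card - S.card) * 1 ^ (S.card - W.card) := by
      intro S; rw [one_pow, mul_one]
    rw [Finset.sum_congr rfl (fun S _ => e3 S), supset_sum K W hW.1 q (1 - q) 1]
    rw [hW.2]
    norm_num
  rw [Finset.sum_congr rfl e2, Finset.sum_const, nsmul_eq_mul, Finset.card_powersetCard]

-- key real inequality
private lemma one_sub_le (p : ℝ) (hp0 : 0 < p) (hp1 : p < 1) :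
    1 - p ≤ (1 - p / 4) * (2 : ℝ) ^ (-p) := by
  have h2 : (0:ℝ) < (2:ℝ) ^ p := Real.rpow_pos_of_pos (by norm_num) p
  have main : (1 - p) * (2 : ℝ) ^ p ≤ 1 - p / 4 := by
    have hlog : Real.log 2 < 0.6931471808 := Real.log_two_lt_d9
    have hlog0 : 0 < Real.log 2 := Real.log_pos (by norm_num)
    have h2p : (2 : ℝ) ^ p = Real.exp (Real.log 2 * p) := by
      rw [Real.rpow_def_of_pos (by norm_num : (0:ℝ) < 2)]
    have hu : Real.log 2 * p < 1 := by nlinarith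
    have hexp : Real.exp (Real.log 2 * p) ≤ 1 / (1 - Real.log 2 * p) := by
      have h1 : 1 - Real.log 2 * p ≤ Real.exp (-(Real.log 2 * p)) := by
        have := Real.add_one_le_exp (-(Real.log 2 * p))
        linarith
      rw [Real.exp_neg] at h1
      rw [le_div_iff₀ (by linarith : (0:ℝ) < 1 - Real.log 2 * p)]
      have h3 : 0 < Real.exp (Real.log 2 * p) := Real.exp_pos _
      calc Real.exp (Real.log 2 * p) * (1 - Real.log 2 * p)
          ≤ Real.exp (Real.log 2 * p) * (Real.exp (Real.log 2 * p))⁻¹ := by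
            apply mul_le_mul_of_nonneg_left h1 (le_of_lt h3)
        _ = 1 := mul_inv_cancel₀ (ne_of_gt h3)
    rw [h2p]
    have hp' : (1 - p) * Real.exp (Real.log 2 * p) ≤ (1 - p) / (1 - Real.log 2 * p) := by
      rw [div_eq_mul_inv, ← one_div]
      apply mul_le_mul_of_nonneg_left hexp (by linarith)
    refine hp'.trans ?_
    rw [div_le_iff₀ (by nlinarith : (0:ℝ) < 1 - Real.log 2 * p)]
    nlinarith [sq_nonneg p, mul_pos hp0 hlog0]
  rw [Real.rpow_neg (by norm_num : (0:ℝ) ≤ 2), mul_comm, inv_mul_eq_div,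
    le_div_iff₀ h2]
  linarith [main]

/-- An abstract cell decomposition scheme for `(H, (A a)_{a ∈ H})` with
parameters `(C', d, s)`:
* `T` assigns to each `S ⊆ H` a finite family `T S` of subsets of `X` whose
  union is `X`, with `|T S| ≤ C'·(|S|^d + 1)`;
* `I` assigns to each cell a subset `I Δ ⊆ H` containing every `a ∈ H` for
  which `A a` crosses `Δ` (for `Δ ∈ Reg = ⋃_{S ⊆ H} T S`);
* for every `S ⊆ H` and `Δ ∈ Reg`: `Δ ∈ T S` iff `I Δ ∩ S = ∅` and `S₀ ⊆ S`
  for some defining set `S₀ ∈ D(Δ)`, where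
  `D(Δ) = {S₀ ⊆ H : |S₀| ≤ s ∧ Δ ∈ T S₀}`. -/
structure ACDScheme {α X : Type} (H : Finset α) (A : α → Set X)
    (C' : ℝ) (d s : ℕ) where
  T : Finset α → Finset (Set X)
  I : Set X → Finset α
  covers : ∀ S ⊆ H, ∀ x : X, ∃ Δ ∈ T S, x ∈ Δ
  card_bound : ∀ S ⊆ H, ((T S).card : ℝ) ≤ C' * ((S.card : ℝ) ^ d + 1)
  I_subset : ∀ Δ : Set X, I Δ ⊆ H
  crosses_mem_I : ∀ S ⊆ H, ∀ Δ ∈ T S, ∀ a ∈ H,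
      (Δ ∩ A a).Nonempty → (Δ \ A a).Nonempty → a ∈ I Δ
  mem_T_iff : ∀ S' ⊆ H, ∀ Δ ∈ T S', ∀ S ⊆ H,
      (Δ ∈ T S ↔ (I Δ ∩ S = ∅ ∧ ∃ S₀ ⊆ S, S₀.card ≤ s ∧ Δ ∈ T S₀))

set_option maxHeartbeats 2000000 in
/-- **Tail bound lemma (axiomatic form).** For every `ε > 0`, `C' > 0`, `d ≥ 1`,
`s ≥ 1` there is a constant `C` such that for every abstract cell decomposition
scheme with parameters `(C', d, s)` over `(H, (A a))` with `|H| = n ≥ 1`, every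
real `1 ≤ r ≤ (1-ε)·n`, and every real `t ≥ 0`, the expectation under the
Bernoulli(`r/n`) distribution on subsets `S ⊆ H` of the number of cells
`Δ ∈ T S` with `|I Δ| ≥ t·n/r` is at most `C·2^(−t)·r^d`. -/
theorem tail_bound_lemma (ε : ℝ) (hε : 0 < ε) (C' : ℝ) (hC' : 0 < C')
    (d s : ℕ) (hd : 1 ≤ d) (hs : 1 ≤ s) :
    ∃ C : ℝ, ∀ (α X : Type) (H : Finset α) (A : α → Set X)
      (𝒯 : ACDScheme H A C' d s), 1 ≤ H.card →
      ∀ r : ℝ, 1 ≤ r → r ≤ (1 - ε) * (H.card : ℝ) →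
      ∀ t : ℝ, 0 ≤ t →
      ∑ S ∈ H.powerset,
          (r / (H.card : ℝ)) ^ S.card * (1 - r / (H.card : ℝ)) ^ (H.card - S.card) *
            (((𝒯.T S).filter
              (fun Δ => t * (H.card : ℝ) / r ≤ ((𝒯.I Δ).card : ℝ))).card : ℝ)
        ≤ C * (2 : ℝ) ^ (-t) * r ^ d := by
  classical
  refine ⟨4 ^ s * C' * ((2 * d : ℝ) ^ d + 2), ?_⟩
  intro α X H A 𝒯 hn r hr1 hrn t ht
  set n := H.card with hn'
  have hn0 : (0 : ℝ) < n := by exact_mod_cast hn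
  have hr0 : (0 : ℝ) < r := lt_of_lt_of_le one_pos hr1
  set p : ℝ := r / n with hp'
  have hp0 : 0 < p := div_pos hr0 hn0
  have hp1 : p < 1 := by
    rw [hp', div_lt_one hn0]
    nlinarith
  set q : ℝ := p / 4 with hq'
  have hq0 : 0 < q := by positivity
  have hq1 : q < 1 := by rw [hq']; linarith
  have h1p : (0:ℝ) ≤ 1 - p := by linarith
  have h1q : (0:ℝ) ≤ 1 - q := by linarith
  set 𝒰 : Finset (Set X) := H.powerset.biUnion 𝒯.T with h𝒰
  set P : Set X → Prop := fun Δ => t * n / r ≤ ((𝒯.I Δ).card : ℝ) with hP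
  -- the expectation functional
  set F : ℝ → Set X → ℝ := fun x Δ =>
    ∑ S ∈ H.powerset, x ^ S.card * (1 - x) ^ (n - S.card) *
      (if Δ ∈ 𝒯.T S then 1 else 0) with hF
  -- swap lemma
  have swap : ∀ (x : ℝ) (P' : Set X → Prop),
      ∑ S ∈ H.powerset, x ^ S.card * (1 - x) ^ (n - S.card) *
          (((𝒯.T S).filter P').card : ℝ)
        = ∑ Δ ∈ 𝒰, (if P' Δ then F x Δ else 0) := by
    intro x P'
    have e1 : ∀ S ∈ H.powerset,
        x ^ S.card * (1 - x) ^ (n - S.card) * (((𝒯.T S).filter P').card : ℝ)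
          = ∑ Δ ∈ 𝒰, x ^ S.card * (1 - x) ^ (n - S.card) *
              (if P' Δ ∧ Δ ∈ 𝒯.T S then 1 else 0) := by
      intro S hS
      rw [← Finset.mul_sum]
      congr 1
      rw [Finset.sum_ite, Finset.sum_const_zero, add_zero, Finset.sum_const,
        nsmul_eq_mul, mul_one]
      congr 1
      apply congrArg
      ext Δ
      simp only [Finset.mem_filter, h𝒰, Finset.mem_biUnion]
      constructor
      · rintro ⟨hΔ, hPΔ⟩; exact ⟨⟨S, hS, hΔ⟩, hPΔ, hΔ⟩
      · rintro ⟨_, hPΔ, hΔ⟩; exact ⟨hΔ, hPΔ⟩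
    rw [Finset.sum_congr rfl e1, Finset.sum_comm]
    refine Finset.sum_congr rfl fun Δ _ => ?_
    by_cases hPΔ : P' Δ
    · simp only [hPΔ, if_true, true_and, hF]
    · simp only [hPΔ, if_false, false_and, mul_zero, Finset.sum_const_zero]
  -- nonnegativity of F
  have Fnonneg : ∀ x : ℝ, 0 ≤ x → x ≤ 1 → ∀ Δ, 0 ≤ F x Δ := by
    intro x hx0 hx1 Δ
    apply Finset.sum_nonneg
    intro S _
    have : (0:ℝ) ≤ 1 - x := by linarith
    have h2 : (0:ℝ) ≤ (if Δ ∈ 𝒯.T S then (1:ℝ) else 0) := by positivity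
    exact mul_nonneg (mul_nonneg (pow_nonneg hx0 _) (pow_nonneg this _)) h2
  -- key per-cell bound
  have key : ∀ Δ ∈ 𝒰, P Δ → F p Δ ≤ 4 ^ s * (2 : ℝ) ^ (-t) * F q Δ := by
    intro Δ hΔ𝒰 hPΔ
    obtain ⟨S', hS'H, hΔ⟩ := Finset.mem_biUnion.mp hΔ𝒰
    rw [Finset.mem_powerset] at hS'H
    set J : Finset α := 𝒯.I Δ with hJ
    have hJH : J ⊆ H := 𝒯.I_subset Δ
    set K : Finset α := H \ J with hK
    have hJK : Disjoint J K := Finset.disjoint_sdiff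
    have hJuK : J ∪ K = H := Finset.union_sdiff_of_subset hJH
    have hcards : J.card + K.card = n := by
      rw [hK, Finset.card_sdiff_of_subset hJH]
      have := Finset.card_le_card hJH
      omega
    set Q : Finset α → Prop := fun R => ∃ S₀, S₀ ⊆ R ∧ S₀.card ≤ s ∧ Δ ∈ 𝒯.T S₀ with hQ
    have char : ∀ A, A ⊆ J → ∀ B, B ⊆ K → (Δ ∈ 𝒯.T (A ∪ B) ↔ (A = ∅ ∧ Q B)) := by
      intro A hAJ B hBK
      have hABH : A ∪ B ⊆ H := Finset.union_subset (hAJ.trans hJH) (hBK.trans (Finset.sdiff_subset))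
      have iff := 𝒯.mem_T_iff S' hS'H Δ hΔ (A ∪ B) hABH
      constructor
      · intro h
        obtain ⟨hI, S₀, hS₀, hcard, hTS₀⟩ := iff.mp h
        have hA : A = ∅ := by
          have hsub : A ⊆ 𝒯.I Δ ∩ (A ∪ B) := fun a ha =>
            Finset.mem_inter.mpr ⟨hAJ ha, Finset.mem_union_left _ ha⟩
          rw [hI] at hsub
          exact Finset.subset_empty.mp hsub
        subst hA
        rw [Finset.empty_union] at hS₀
        exact ⟨rfl, S₀, hS₀, hcard, hTS₀⟩
      · rintro ⟨rfl, S₀, hS₀B, hc, hT⟩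
        rw [Finset.empty_union] at *
        apply iff.mpr
        refine ⟨?_, S₀, hS₀B, hc, hT⟩
        have hdisj : Disjoint (𝒯.I Δ) B := Finset.disjoint_of_subset_right hBK hJK
        exact Finset.disjoint_iff_inter_eq_empty.mp hdisj
    -- decomposition of F
    have decomp : ∀ x : ℝ, F x Δ = (1 - x) ^ J.card *
        ∑ B ∈ K.powerset, (if Q B then x ^ B.card * (1 - x) ^ (K.card - B.card) else 0) := by
      intro x
      rw [hF]
      simp only []
      have hHpow : H.powerset = (J ∪ K).powerset := by rw [hJuK]
      rw [hHpow, powerset_union_sum hJK]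
      rw [Finset.sum_eq_single_of_mem ∅ (Finset.empty_mem_powerset J)]
      · rw [Finset.mul_sum]
        refine Finset.sum_congr rfl fun B hB => ?_
        rw [Finset.mem_powerset] at hB
        rw [Finset.empty_union]
        have hBcard : B.card ≤ K.card := Finset.card_le_card hB
        have hexp : n - B.card = J.card + (K.card - B.card) := by omega
        rw [hexp, pow_add]
        have hch : Δ ∈ 𝒯.T B ↔ Q B := by
          have h := char ∅ (Finset.empty_subset J) B hB
          rw [Finset.empty_union] at h
          simpa using h
        by_cases hQB : Q B
        · rw [if_pos hQB, if_pos (hch.mpr hQB)]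
          ring
        · rw [if_neg hQB, if_neg (fun hmem => hQB (hch.mp hmem))]
          ring
      · intro A hA hAne
        apply Finset.sum_eq_zero
        intro B hB
        rw [Finset.mem_powerset] at hA hB
        rw [if_neg]
        · ring
        · intro hmem
          exact hAne ((char A hA B hB).mp hmem).1
    -- monotonicity / witness for Q
    have hQmono : ∀ ⦃W R : Finset α⦄, W ⊆ R → Q W → Q R := by
      rintro W R hWR ⟨S₀, h1, h2, h3⟩
      exact ⟨S₀, h1.trans hWR, h2, h3⟩
    have hQwit : ∀ ⦃U : Finset α⦄, Q U → ∃ W, W ⊆ U ∧ W.card ≤ s ∧ Q W := by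
      rintro U ⟨S₀, h1, h2, h3⟩
      exact ⟨S₀, h1, h2, ⟨S₀, Finset.Subset.refl _, h2, h3⟩⟩
    have hphi := phi_mono K p hp0.le hp1.le s Q hQmono hQwit
    rw [← hq'] at hphi
    have hΦp0 : 0 ≤ ∑ B ∈ K.powerset,
        (if Q B then p ^ B.card * (1 - p) ^ (K.card - B.card) else 0) := by
      apply Finset.sum_nonneg
      intro B _
      by_cases hQB : Q B
      · rw [if_pos hQB]
        exact mul_nonneg (pow_nonneg hp0.le _) (pow_nonneg h1p _)
      · rw [if_neg hQB]
    have hΦq0 : 0 ≤ ∑ B ∈ K.powerset,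
        (if Q B then q ^ B.card * (1 - q) ^ (K.card - B.card) else 0) := by
      apply Finset.sum_nonneg
      intro B _
      by_cases hQB : Q B
      · rw [if_pos hQB]
        exact mul_nonneg (pow_nonneg hq0.le _) (pow_nonneg h1q _)
      · rw [if_neg hQB]
    -- exponent bound
    have hm : t ≤ p * J.card := by
      have h0 : t * n / r = t / p := by
        rw [hp']
        field_simp
      have hPΔ' : t * n / r ≤ (J.card : ℝ) := hPΔ
      rw [h0, div_le_iff₀ hp0] at hPΔ'
      calc t ≤ (J.card : ℝ) * p := hPΔ'
        _ = p * J.card := mul_comm _ _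
    have hpow : (1 - p) ^ J.card ≤ (2 : ℝ) ^ (-t) * (1 - q) ^ J.card := by
      calc (1 - p) ^ J.card ≤ ((1 - q) * (2 : ℝ) ^ (-p)) ^ J.card := by
            apply pow_le_pow_left₀ h1p
            rw [hq']
            exact one_sub_le p hp0 hp1
        _ = (1 - q) ^ J.card * ((2 : ℝ) ^ (-p)) ^ (J.card : ℕ) := mul_pow _ _ _
        _ = (1 - q) ^ J.card * (2 : ℝ) ^ (-p * J.card) := by
            rw [← Real.rpow_natCast ((2:ℝ) ^ (-p)) J.card,
              ← Real.rpow_mul (by norm_num : (0:ℝ) ≤ 2)]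
        _ ≤ (1 - q) ^ J.card * (2 : ℝ) ^ (-t) := by
            apply mul_le_mul_of_nonneg_left ?_ (pow_nonneg h1q _)
            apply Real.rpow_le_rpow_of_exponent_le (by norm_num)
            nlinarith
        _ = (2 : ℝ) ^ (-t) * (1 - q) ^ J.card := mul_comm _ _
    rw [decomp p, decomp q]
    have main := mul_le_mul hpow hphi hΦp0
      (mul_nonneg (Real.rpow_nonneg (by norm_num) _) (pow_nonneg h1q _))
    have e : ((2 : ℝ) ^ (-t) * (1 - q) ^ J.card) * (4 ^ s * ∑ B ∈ K.powerset,
          (if Q B then q ^ B.card * (1 - q) ^ (K.card - B.card) else 0))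
        = 4 ^ s * (2 : ℝ) ^ (-t) * ((1 - q) ^ J.card * ∑ B ∈ K.powerset,
          (if Q B then q ^ B.card * (1 - q) ^ (K.card - B.card) else 0)) := by ring
    rw [e] at main
    exact main
  -- final assembly
  rw [swap p P]
  have step1 : ∑ Δ ∈ 𝒰, (if P Δ then F p Δ else 0)
      ≤ ∑ Δ ∈ 𝒰, 4 ^ s * (2 : ℝ) ^ (-t) * F q Δ := by
    apply Finset.sum_le_sum
    intro Δ hΔ
    by_cases hPΔ : P Δ
    · rw [if_pos hPΔ]
      exact key Δ hΔ hPΔ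
    · rw [if_neg hPΔ]
      exact mul_nonneg (mul_nonneg (by positivity) (Real.rpow_nonneg (by norm_num) _))
        (Fnonneg q hq0.le hq1.le Δ)
  have step2 : ∑ Δ ∈ 𝒰, 4 ^ s * (2 : ℝ) ^ (-t) * F q Δ
      = 4 ^ s * (2 : ℝ) ^ (-t) *
        ∑ S ∈ H.powerset, q ^ S.card * (1 - q) ^ (n - S.card) * ((𝒯.T S).card : ℝ) := by
    rw [← Finset.mul_sum]
    congr 1
    have e := swap q (fun _ => True)
    simp only [Finset.filter_true, if_true] at e
    exact e.symm
  have sum1 : ∑ S ∈ H.powerset, q ^ S.card * (1 - q) ^ (n - S.card) = 1 := by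
    have h := binom_sum H q (1 - q)
    rw [show q + (1 - q) = (1:ℝ) by ring, one_pow] at h
    exact h
  have hrd1 : (1:ℝ) ≤ r ^ d := by
    calc (1:ℝ) = 1 ^ d := (one_pow d).symm
      _ ≤ r ^ d := pow_le_pow_left₀ (by norm_num) hr1 d
  have step3 : ∑ S ∈ H.powerset, q ^ S.card * (1 - q) ^ (n - S.card) * ((𝒯.T S).card : ℝ)
      ≤ C' * (((2 * d : ℝ) ^ d + 2) * r ^ d) := by
    have wnn : ∀ S : Finset α, (0:ℝ) ≤ q ^ S.card * (1 - q) ^ (n - S.card) := fun S =>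
      mul_nonneg (pow_nonneg hq0.le _) (pow_nonneg h1q _)
    have t1 : ∑ S ∈ H.powerset, q ^ S.card * (1 - q) ^ (n - S.card) * ((𝒯.T S).card : ℝ)
        ≤ ∑ S ∈ H.powerset, q ^ S.card * (1 - q) ^ (n - S.card) *
            (C' * ((S.card : ℝ) ^ d + 1)) := by
      apply Finset.sum_le_sum
      intro S hS
      exact mul_le_mul_of_nonneg_left (𝒯.card_bound S (Finset.mem_powerset.mp hS)) (wnn S)
    refine t1.trans ?_
    have t2 : ∑ S ∈ H.powerset, q ^ S.card * (1 - q) ^ (n - S.card) *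
          (C' * ((S.card : ℝ) ^ d + 1))
        = C' * ((∑ S ∈ H.powerset, q ^ S.card * (1 - q) ^ (n - S.card) * (S.card : ℝ) ^ d) + 1) := by
      have e : ∀ S ∈ H.powerset, q ^ S.card * (1 - q) ^ (n - S.card) *
            (C' * ((S.card : ℝ) ^ d + 1))
          = C' * (q ^ S.card * (1 - q) ^ (n - S.card) * (S.card : ℝ) ^ d)
            + C' * (q ^ S.card * (1 - q) ^ (n - S.card)) := fun S _ => by ring
      rw [Finset.sum_congr rfl e, Finset.sum_add_distrib, ← Finset.mul_sum, ← Finset.mul_sum,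
        sum1]
      ring
    rw [t2]
    have moment : ∑ S ∈ H.powerset, q ^ S.card * (1 - q) ^ (n - S.card) * (S.card : ℝ) ^ d
        ≤ r ^ d + (2 * d : ℝ) ^ d := by
      have t3 : ∑ S ∈ H.powerset, q ^ S.card * (1 - q) ^ (n - S.card) * (S.card : ℝ) ^ d
          ≤ ∑ S ∈ H.powerset, q ^ S.card * (1 - q) ^ (n - S.card) *
              (2 ^ d * (d.factorial : ℝ) * (S.card.choose d : ℝ) + (2 * d : ℝ) ^ d) := by
        apply Finset.sum_le_sum
        intro S _
        exact mul_le_mul_of_nonneg_left (nat_moment S.card d) (wnn S)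
      refine t3.trans ?_
      have t4 : ∑ S ∈ H.powerset, q ^ S.card * (1 - q) ^ (n - S.card) *
            (2 ^ d * (d.factorial : ℝ) * (S.card.choose d : ℝ) + (2 * d : ℝ) ^ d)
          = 2 ^ d * (d.factorial : ℝ) * ((n.choose d : ℝ) * q ^ d) + (2 * d : ℝ) ^ d := by
        have cm := choose_moment H q d
        rw [← hn'] at cm
        calc ∑ S ∈ H.powerset, q ^ S.card * (1 - q) ^ (n - S.card) *
              (2 ^ d * (d.factorial : ℝ) * (S.card.choose d : ℝ) + (2 * d : ℝ) ^ d)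
            = 2 ^ d * (d.factorial : ℝ) *
                (∑ S ∈ H.powerset, q ^ S.card * (1 - q) ^ (n - S.card) * (S.card.choose d : ℝ))
              + (2 * d : ℝ) ^ d *
                ∑ S ∈ H.powerset, q ^ S.card * (1 - q) ^ (n - S.card) := by
              rw [Finset.mul_sum, Finset.mul_sum, ← Finset.sum_add_distrib]
              refine Finset.sum_congr rfl fun S _ => by ring
          _ = _ := by rw [cm, sum1, mul_one]
      rw [t4]
      have hfc : (d.factorial : ℝ) * (n.choose d : ℝ) ≤ (n : ℝ) ^ d := by
        have hnat : d.factorial * n.choose d ≤ n ^ d := by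
          rw [← Nat.descFactorial_eq_factorial_mul_choose]
          exact Nat.descFactorial_le_pow n d
        exact_mod_cast hnat
      have h2nq : 2 * (n : ℝ) * q = r / 2 := by
        rw [hq', hp']
        field_simp
        ring
      have t5 : 2 ^ d * (d.factorial : ℝ) * ((n.choose d : ℝ) * q ^ d) ≤ r ^ d := by
        calc 2 ^ d * (d.factorial : ℝ) * ((n.choose d : ℝ) * q ^ d)
            = ((d.factorial : ℝ) * (n.choose d : ℝ)) * (2 ^ d * q ^ d) := by ring
          _ ≤ (n : ℝ) ^ d * (2 ^ d * q ^ d) := by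
              apply mul_le_mul_of_nonneg_right hfc
              positivity
          _ = (2 * (n : ℝ) * q) ^ d := by rw [mul_pow, mul_pow]; ring
          _ = (r / 2) ^ d := by rw [h2nq]
          _ ≤ r ^ d := pow_le_pow_left₀ (by linarith) (by linarith) d
      linarith
    have final : C' * ((∑ S ∈ H.powerset, q ^ S.card * (1 - q) ^ (n - S.card) * (S.card : ℝ) ^ d) + 1)
        ≤ C' * (r ^ d + (2 * d : ℝ) ^ d + 1) := by
      apply mul_le_mul_of_nonneg_left ?_ hC'.le
      linarith
    refine final.trans ?_
    apply mul_le_mul_of_nonneg_left ?_ hC'.le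
    have h2d : (0:ℝ) ≤ (2 * d : ℝ) ^ d := by positivity
    nlinarith
  calc ∑ Δ ∈ 𝒰, (if P Δ then F p Δ else 0)
      ≤ ∑ Δ ∈ 𝒰, 4 ^ s * (2 : ℝ) ^ (-t) * F q Δ := step1
    _ = 4 ^ s * (2 : ℝ) ^ (-t) *
        ∑ S ∈ H.powerset, q ^ S.card * (1 - q) ^ (n - S.card) * ((𝒯.T S).card : ℝ) := step2
    _ ≤ 4 ^ s * (2 : ℝ) ^ (-t) * (C' * (((2 * d : ℝ) ^ d + 2) * r ^ d)) := by
        apply mul_le_mul_of_nonneg_left step3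
        positivity
    _ = 4 ^ s * C' * ((2 * d : ℝ) ^ d + 2) * (2 : ℝ) ^ (-t) * r ^ d := by ring
end

section
/- Set-system correlation lemma. Let Ω be a finite set of size m, let D_1, …, D_q be subsets of Ω with |D_i| ≤ u for all 1 ≤ i ≤ q (for some natural number u), and let F = {X ⊆ Ω : D_i ⊆ X for some i, 1 ≤ i ≤ q} be the up-set generated by the D_i. Let p̃ and p be real numbers with 0 < p̃ ≤ p ≤ 1. Then Σ_{X ∈ F} p̃^{|X|}·(1−p̃)^{m−|X|} ≥ (p̃/p)^u · Σ_{X ∈ F} p^{|X|}·(1−p)^{m−|X|}. -/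
open scoped Classical

lemma aux_binom {α : Type*} (T : Finset α) (a b : ℝ) :
    ∑ S ∈ T.powerset, a ^ S.card * b ^ (T.card - S.card) = (a + b) ^ T.card := by
  rw [← Finset.prod_const, Finset.prod_add]
  apply Finset.sum_congr rfl
  intro S hS
  rw [Finset.mem_powerset] at hS
  rw [Finset.prod_const, Finset.prod_const, Finset.card_sdiff_of_subset hS]

lemma aux_super {α : Type*} (Ω X : Finset α) (hX : X ⊆ Ω) (f : Finset α → ℝ) :
    ∑ Y ∈ Ω.powerset.filter (fun Y => X ⊆ Y), f Y
      = ∑ t ∈ (Ω \ X).powerset, f (X ∪ t) := by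
  refine Finset.sum_nbij' (fun Y => Y \ X) (fun t => X ∪ t) ?_ ?_ ?_ ?_ ?_
  · intro Y hY
    simp only [Finset.mem_filter, Finset.mem_powerset] at *
    exact Finset.sdiff_subset_sdiff hY.1 (le_refl X)
  · intro t ht
    simp only [Finset.mem_filter, Finset.mem_powerset] at *
    constructor
    · exact Finset.union_subset hX (ht.trans (Finset.sdiff_subset))
    · exact Finset.subset_union_left
  · intro Y hY
    simp only [Finset.mem_filter, Finset.mem_powerset] at hY
    exact Finset.union_sdiff_of_subset hY.2
  · intro t ht
    simp only [Finset.mem_powerset] at ht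
    exact Finset.union_sdiff_cancel_left (Finset.disjoint_of_subset_right ht Finset.disjoint_sdiff)
  · intro Y hY
    simp only [Finset.mem_filter, Finset.mem_powerset] at hY
    rw [Finset.union_sdiff_of_subset hY.2]

lemma aux_A {α : Type*} (Ω X : Finset α) (hX : X ⊆ Ω) (p r : ℝ) :
    ∑ Y ∈ Ω.powerset.filter (fun Y => X ⊆ Y),
      p ^ Y.card * (1 - p) ^ (Ω.card - Y.card) * (r ^ X.card * (1 - r) ^ (Y.card - X.card))
    = (p * r) ^ X.card * (1 - p * r) ^ (Ω.card - X.card) := by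
  rw [aux_super Ω X hX]
  have hcard : (Ω \ X).card = Ω.card - X.card := Finset.card_sdiff_of_subset hX
  have hXΩ : X.card ≤ Ω.card := Finset.card_le_card hX
  rw [← hcard, show (1 - p * r) = (p * (1 - r)) + (1 - p) by ring,
    ← aux_binom (Ω \ X) (p * (1 - r)) (1 - p), Finset.mul_sum]
  apply Finset.sum_congr rfl
  intro t ht
  rw [Finset.mem_powerset] at ht
  have hdisj : Disjoint X t := Finset.disjoint_of_subset_right ht Finset.disjoint_sdiff
  have hcu : (X ∪ t).card = X.card + t.card := Finset.card_union_of_disjoint hdisj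
  have htk : t.card ≤ (Ω \ X).card := Finset.card_le_card ht
  rw [hcu, show X.card + t.card - X.card = t.card from by omega,
    show Ω.card - (X.card + t.card) = (Ω \ X).card - t.card from by omega,
    pow_add, mul_pow p r X.card, mul_pow p (1-r) t.card]
  ring

lemma aux_B {α : Type*} (Y E : Finset α) (hE : E ⊆ Y) (r : ℝ) :
    ∑ X ∈ Y.powerset.filter (fun X => E ⊆ X),
      r ^ X.card * (1 - r) ^ (Y.card - X.card) = r ^ E.card := by
  rw [aux_super Y E hE]
  have hcard : (Y \ E).card = Y.card - E.card := Finset.card_sdiff_of_subset hE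
  have hEY : E.card ≤ Y.card := Finset.card_le_card hE
  have h1 : (1 : ℝ) = r + (1 - r) := by ring
  calc ∑ t ∈ (Y \ E).powerset, r ^ (E ∪ t).card * (1 - r) ^ (Y.card - (E ∪ t).card)
      = r ^ E.card * ∑ t ∈ (Y \ E).powerset, r ^ t.card * (1 - r) ^ ((Y \ E).card - t.card) := by
        rw [Finset.mul_sum]
        apply Finset.sum_congr rfl
        intro t ht
        rw [Finset.mem_powerset] at ht
        have hdisj : Disjoint E t := Finset.disjoint_of_subset_right ht Finset.disjoint_sdiff
        have hcu : (E ∪ t).card = E.card + t.card := Finset.card_union_of_disjoint hdisj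
        have htk : t.card ≤ (Y \ E).card := Finset.card_le_card ht
        rw [hcu, show Y.card - (E.card + t.card) = (Y \ E).card - t.card from by omega,
          pow_add]
        ring
    _ = r ^ E.card := by rw [aux_binom, show r + (1 - r) = 1 by ring, one_pow, mul_one]

/-- **Set-system correlation lemma.** Let `Ω` be a finite set of size `m`, let
`D 1, …, D q` be subsets of `Ω` with `|D i| ≤ u`, and let
`F = {X ⊆ Ω : D i ⊆ X for some i}` be the up-set generated by the `D i`. For
real numbers `0 < p' ≤ p ≤ 1` (here `p'` plays the role of `p̃`),
`Σ_{X ∈ F} p'^|X|·(1−p')^(m−|X|) ≥ (p'/p)^u · Σ_{X ∈ F} p^|X|·(1−p)^(m−|X|)`. -/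
theorem set_system_correlation {α : Type*} (Ω : Finset α) (m : ℕ) (hm : Ω.card = m)
    (q u : ℕ) (D : Fin q → Finset α) (hDΩ : ∀ i, D i ⊆ Ω) (hDu : ∀ i, (D i).card ≤ u)
    (p' p : ℝ) (hp' : 0 < p') (hp'p : p' ≤ p) (hp : p ≤ 1) :
    ∑ X ∈ Ω.powerset.filter (fun X => ∃ i, D i ⊆ X),
        p' ^ X.card * (1 - p') ^ (m - X.card)
      ≥ (p' / p) ^ u *
        ∑ X ∈ Ω.powerset.filter (fun X => ∃ i, D i ⊆ X),
          p ^ X.card * (1 - p) ^ (m - X.card) := by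
  subst hm
  have hp0 : 0 < p := lt_of_lt_of_le hp' hp'p
  set r : ℝ := p' / p with hrdef
  have hr0 : 0 < r := div_pos hp' hp0
  have hr1 : r ≤ 1 := div_le_one_of_le₀ hp'p hp0.le
  have hpr : p * r = p' := by rw [hrdef]; field_simp
  have hp1 : (0:ℝ) ≤ 1 - p := by linarith
  have hr1' : (0:ℝ) ≤ 1 - r := by linarith
  set F := Ω.powerset.filter (fun X => ∃ i, D i ⊆ X) with hF
  -- the generic nonnegative kernel
  have hgnn : ∀ X Y : Finset α, 0 ≤ r ^ X.card * (1 - r) ^ (Y.card - X.card) :=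
    fun X Y => mul_nonneg (pow_nonneg hr0.le _) (pow_nonneg hr1' _)
  have hwnn : ∀ Y : Finset α, 0 ≤ p ^ Y.card * (1 - p) ^ (Ω.card - Y.card) :=
    fun Y => mul_nonneg (pow_nonneg hp0.le _) (pow_nonneg hp1 _)
  rw [ge_iff_le]
  calc (p' / p) ^ u * ∑ Y ∈ F, p ^ Y.card * (1 - p) ^ (Ω.card - Y.card)
      = ∑ Y ∈ F, r ^ u * (p ^ Y.card * (1 - p) ^ (Ω.card - Y.card)) := by
        rw [← hrdef, Finset.mul_sum]
    _ ≤ ∑ Y ∈ F, ∑ X ∈ F.filter (fun X => X ⊆ Y),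
          p ^ Y.card * (1 - p) ^ (Ω.card - Y.card)
            * (r ^ X.card * (1 - r) ^ (Y.card - X.card)) := by
        apply Finset.sum_le_sum
        intro Y hY
        simp only [hF, Finset.mem_filter, Finset.mem_powerset] at hY
        obtain ⟨hYΩ, i, hDY⟩ := hY
        rw [← Finset.mul_sum, mul_comm (r ^ u)]
        apply mul_le_mul_of_nonneg_left _ (hwnn Y)
        calc r ^ u ≤ r ^ (D i).card := pow_le_pow_of_le_one hr0.le hr1 (hDu i)
          _ = ∑ X ∈ Y.powerset.filter (fun X => D i ⊆ X),
                r ^ X.card * (1 - r) ^ (Y.card - X.card) := (aux_B Y (D i) hDY r).symm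
          _ ≤ ∑ X ∈ F.filter (fun X => X ⊆ Y),
                r ^ X.card * (1 - r) ^ (Y.card - X.card) := by
              apply Finset.sum_le_sum_of_subset_of_nonneg
              · intro X hX
                simp only [hF, Finset.mem_filter, Finset.mem_powerset] at *
                exact ⟨⟨hX.1.trans hYΩ, ⟨i, hX.2⟩⟩, hX.1⟩
              · intro X _ _; exact hgnn X Y
    _ ≤ ∑ Y ∈ Ω.powerset, ∑ X ∈ F.filter (fun X => X ⊆ Y),
          p ^ Y.card * (1 - p) ^ (Ω.card - Y.card)
            * (r ^ X.card * (1 - r) ^ (Y.card - X.card)) := by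
        apply Finset.sum_le_sum_of_subset_of_nonneg (Finset.filter_subset _ _)
        intro Y _ _
        exact Finset.sum_nonneg fun X _ => mul_nonneg (hwnn Y) (hgnn X Y)
    _ = ∑ X ∈ F, ∑ Y ∈ Ω.powerset.filter (fun Y => X ⊆ Y),
          p ^ Y.card * (1 - p) ^ (Ω.card - Y.card)
            * (r ^ X.card * (1 - r) ^ (Y.card - X.card)) := by
        refine (Finset.sum_comm' ?_).symm
        intro X Y
        simp only [Finset.mem_filter, Finset.mem_powerset]
        tauto
    _ = ∑ X ∈ F, p' ^ X.card * (1 - p') ^ (Ω.card - X.card) := by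
        apply Finset.sum_congr rfl
        intro X hX
        simp only [hF, Finset.mem_filter, Finset.mem_powerset] at hX
        rw [aux_A Ω X hX.1 p r, hpr]
end

section
/- d-th moment bound for the binomial distribution. For every natural number n, every natural number d ≥ 1, and every real p with 0 ≤ p ≤ 1, one has Σ_{k=0}^{n} C(n,k)·p^k·(1−p)^{n−k}·k^d ≤ (n·p + d)^d. Equivalently, if S is a random subset of an n-element set H obtained by including each element independently with probability p, then E(|S|^d) ≤ (np + d)^d. -/
open Finset

lemma binom_moment_aux (p : ℝ) (hp0 : 0 ≤ p) (hp1 : p ≤ 1) :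
    ∀ d n : ℕ,
      ∑ k ∈ range (n + 1), (n.choose k : ℝ) * p ^ k * (1 - p) ^ (n - k) * (k : ℝ) ^ d
        ≤ ((n : ℝ) * p + (d : ℝ)) ^ d := by
  intro d
  induction d using Nat.strong_induction_on with
  | _ d IH =>
    match d with
    | 0 =>
      intro n
      simp only [pow_zero, mul_one, Nat.cast_zero, add_zero]
      have h1 : ((p + (1 - p)) : ℝ) ^ n
          = ∑ k ∈ range (n + 1), p ^ k * (1 - p) ^ (n - k) * (n.choose k : ℝ) :=
        add_pow p (1 - p) n
      rw [show p + (1 - p) = 1 by ring, one_pow] at h1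
      calc ∑ k ∈ range (n + 1), (n.choose k : ℝ) * p ^ k * (1 - p) ^ (n - k)
          = ∑ k ∈ range (n + 1), p ^ k * (1 - p) ^ (n - k) * (n.choose k : ℝ) := by
            refine Finset.sum_congr rfl fun k _ => by ring
        _ = 1 := h1.symm
        _ ≤ 1 := le_refl 1
    | e + 1 =>
      intro n
      match n with
      | 0 =>
        have : ∑ k ∈ range 1, ((0:ℕ).choose k : ℝ) * p ^ k * (1 - p) ^ (0 - k) * (k : ℝ) ^ (e+1) = 0 := by
          simp
        rw [this]
        positivity
      | m + 1 =>
        have hnp : (0:ℝ) ≤ ((m:ℝ) + 1) * p := by positivity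
        -- reindex
        rw [Finset.sum_range_succ']
        have h0 : ((m+1).choose 0 : ℝ) * p ^ 0 * (1 - p) ^ (m + 1 - 0) * ((0:ℕ) : ℝ) ^ (e+1) = 0 := by
          simp
        rw [h0, add_zero]
        have key : ∀ j ∈ range (m + 1),
            ((m+1).choose (j+1) : ℝ) * p ^ (j+1) * (1 - p) ^ (m + 1 - (j+1)) * ((j+1 : ℕ) : ℝ) ^ (e+1)
            = ((m:ℝ) + 1) * p * ((m.choose j : ℝ) * p ^ j * (1 - p) ^ (m - j) * ((j:ℝ) + 1) ^ e) := by
          intro j _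
          have hc : ((m+1).choose (j+1) : ℝ) * ((j:ℝ) + 1) = ((m:ℝ) + 1) * (m.choose j : ℝ) := by
            have := Nat.add_one_mul_choose_eq m j
            have h2 : (((m+1).choose (j+1) * (j+1) : ℕ) : ℝ) = (((m+1) * m.choose j : ℕ) : ℝ) := by
              exact_mod_cast congrArg (fun x : ℕ => (x : ℝ)) this.symm
            push_cast at h2
            linarith [h2]
          have hsub : m + 1 - (j + 1) = m - j := by omega
          rw [hsub]
          push_cast
          linear_combination (p ^ (j+1) * (1 - p) ^ (m - j) * ((j:ℝ) + 1) ^ e) * hc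
        rw [Finset.sum_congr rfl key, ← Finset.mul_sum]
        -- inner sum bound
        have expand : ∀ j : ℕ, ((j:ℝ) + 1) ^ e
            = ∑ i ∈ range (e + 1), (j:ℝ) ^ i * 1 ^ (e - i) * (e.choose i : ℝ) :=
          fun j => add_pow (j:ℝ) 1 e
        have swap : ∑ j ∈ range (m + 1), (m.choose j : ℝ) * p ^ j * (1 - p) ^ (m - j) * ((j:ℝ) + 1) ^ e
            = ∑ i ∈ range (e + 1), (e.choose i : ℝ) *
                ∑ j ∈ range (m + 1), (m.choose j : ℝ) * p ^ j * (1 - p) ^ (m - j) * (j:ℝ) ^ i := by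
          simp_rw [expand, Finset.mul_sum]
          rw [Finset.sum_comm]
          refine Finset.sum_congr rfl fun i _ => Finset.sum_congr rfl fun j _ => by ring
        have hB : (0:ℝ) ≤ ((m:ℝ) + 1) * p + (e:ℝ) := by positivity
        have hT : ∑ j ∈ range (m + 1), (m.choose j : ℝ) * p ^ j * (1 - p) ^ (m - j) * ((j:ℝ) + 1) ^ e
            ≤ (((m:ℝ) + 1) * p + (e:ℝ) + 1) ^ e := by
          rw [swap]
          have step : ∑ i ∈ range (e + 1), (e.choose i : ℝ) *
                ∑ j ∈ range (m + 1), (m.choose j : ℝ) * p ^ j * (1 - p) ^ (m - j) * (j:ℝ) ^ i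
              ≤ ∑ i ∈ range (e + 1), (e.choose i : ℝ) * (((m:ℝ) + 1) * p + (e:ℝ)) ^ i := by
            refine Finset.sum_le_sum fun i hi => ?_
            have hie' : i ≤ e := Nat.lt_succ_iff.mp (Finset.mem_range.mp hi)
            have h1 := IH i (by omega) m
            have hx0 : (0:ℝ) ≤ (m:ℝ) * p + (i:ℝ) := by positivity
            have hxy : (m:ℝ) * p + (i:ℝ) ≤ ((m:ℝ) + 1) * p + (e:ℝ) := by
              have : (i:ℝ) ≤ (e:ℝ) := by exact_mod_cast hie'
              nlinarith
            have h2 : ((m:ℝ) * p + (i:ℝ)) ^ i ≤ (((m:ℝ) + 1) * p + (e:ℝ)) ^ i :=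
              pow_le_pow_left₀ hx0 hxy i
            exact mul_le_mul_of_nonneg_left (h1.trans h2) (by positivity)
          refine step.trans ?_
          have h3 : ((((m:ℝ) + 1) * p + (e:ℝ)) + 1) ^ e
              = ∑ i ∈ range (e + 1), (((m:ℝ) + 1) * p + (e:ℝ)) ^ i * 1 ^ (e - i) * (e.choose i : ℝ) :=
            add_pow _ 1 e
          rw [show (((m:ℝ) + 1) * p + (e:ℝ) + 1) = ((((m:ℝ) + 1) * p + (e:ℝ)) + 1) by ring, h3]
          refine le_of_eq (Finset.sum_congr rfl fun i _ => by ring)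
        calc ((m:ℝ) + 1) * p * ∑ j ∈ range (m + 1),
              (m.choose j : ℝ) * p ^ j * (1 - p) ^ (m - j) * ((j:ℝ) + 1) ^ e
            ≤ ((m:ℝ) + 1) * p * (((m:ℝ) + 1) * p + (e:ℝ) + 1) ^ e :=
              mul_le_mul_of_nonneg_left hT hnp
          _ ≤ (((m:ℝ) + 1) * p + (e:ℝ) + 1) ^ (e + 1) := by
              rw [pow_succ']
              have hX : (0:ℝ) ≤ ((m:ℝ) + 1) * p + (e:ℝ) + 1 := by positivity
              exact mul_le_mul_of_nonneg_right (by linarith) (pow_nonneg hX e)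
          _ = (((m+1:ℕ):ℝ) * p + ((e+1:ℕ):ℝ)) ^ (e + 1) := by push_cast; ring_nf

/-- **`d`-th moment bound for the binomial distribution.** For every `n`,
every `d ≥ 1`, and every real `0 ≤ p ≤ 1`,
`Σ_{k=0}^{n} C(n,k)·p^k·(1−p)^(n−k)·k^d ≤ (n·p + d)^d`. -/
theorem binomial_moment_bound (n d : ℕ) (hd : 1 ≤ d) (p : ℝ)
    (hp0 : 0 ≤ p) (hp1 : p ≤ 1) :
    ∑ k ∈ Finset.range (n + 1),
        (n.choose k : ℝ) * p ^ k * (1 - p) ^ (n - k) * (k : ℝ) ^ d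
      ≤ ((n : ℝ) * p + (d : ℝ)) ^ d :=
  binom_moment_aux p hp0 hp1 d n
end

section
/- Counting tuples with a prescribed number of distinct coordinates. For all natural numbers n, d and every k with 0 ≤ k ≤ d, the number of tuples (i_1, i_2, …, i_d) ∈ {1, …, n}^d such that the set {i_1, i_2, …, i_d} has exactly d−k elements is at most C(d,k)·d^k·n^{d−k}. -/
open Finset

namespace CountTuplesAux

variable {n d : ℕ}

/-- the minimal position with the same value as position `i`. -/
noncomputable def minRep (f : Fin d → Fin n) (i : Fin d) : Fin d :=
  (univ.filter fun j => f j = f i).min' ⟨i, by simp⟩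

lemma minRep_spec (f : Fin d → Fin n) (i : Fin d) : f (minRep f i) = f i := by
  have h := (univ.filter fun j => f j = f i).min'_mem ⟨i, by simp⟩
  simpa [minRep] using (mem_filter.mp h).2

lemma minRep_eq_of_eq (f : Fin d → Fin n) {i i' : Fin d} (h : f i = f i') :
    minRep f i = minRep f i' := by
  unfold minRep
  congr 1
  ext j
  simp [h]

lemma minRep_idem (f : Fin d → Fin n) (i : Fin d) :
    minRep f (minRep f i) = minRep f i :=
  minRep_eq_of_eq f (minRep_spec f i)

/-- the set of leaders has the same cardinality as the image. -/
lemma card_leaders (f : Fin d → Fin n) :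
    (univ.filter fun i => minRep f i = i).card = (univ.image f).card := by
  rw [← Finset.card_image_of_injOn (f := f)]
  · congr 1
    ext v
    simp only [mem_image, mem_filter, mem_univ, true_and]
    constructor
    · rintro ⟨j, _, rfl⟩
      exact ⟨j, rfl⟩
    · rintro ⟨j, rfl⟩
      exact ⟨minRep f j, minRep_idem f j, minRep_spec f j⟩
  · intro i hi i' hi' hff
    simp only [coe_filter, Set.mem_setOf_eq] at hi hi'
    rw [← hi.2, ← hi'.2]
    exact minRep_eq_of_eq f hff

end CountTuplesAux

open CountTuplesAux in
/-- **Counting tuples with a prescribed number of distinct coordinates.** For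
all naturals `n, d` and every `k ≤ d`, the number of tuples
`(i₁, …, i_d) ∈ {1, …, n}^d` whose set of entries has exactly `d − k` elements
is at most `C(d,k)·d^k·n^(d−k)`. -/
theorem count_tuples_distinct_coords (n d k : ℕ) (hk : k ≤ d) :
    (Finset.univ.filter (fun f : Fin d → Fin n =>
        (Finset.univ.image f).card = d - k)).card
      ≤ d.choose k * d ^ k * n ^ (d - k) := by
  classical
  set A := Finset.univ.filter (fun f : Fin d → Fin n =>
      (Finset.univ.image f).card = d - k) with hA
  -- the "repeat set" of f
  set R : (Fin d → Fin n) → Finset (Fin d) :=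
    fun f => univ.filter fun i => ¬ minRep f i = i with hR
  have hmap : ∀ f ∈ A, R f ∈ (univ : Finset (Fin d)).powersetCard k := by
    intro f hf
    rw [mem_powersetCard]
    refine ⟨subset_univ _, ?_⟩
    have hL : (univ.filter fun i => minRep f i = i).card = d - k := by
      rw [card_leaders]
      simpa [hA] using (mem_filter.mp hf).2
    have hcard : (R f).card = d - (d - k) := by
      show (univ.filter fun i => ¬ minRep f i = i).card = d - (d - k)
      rw [Finset.filter_not, card_sdiff_of_subset (filter_subset _ _), card_univ, Fintype.card_fin, hL]
    omega
  rw [Finset.card_eq_sum_card_fiberwise hmap]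
  have hbound : ∀ S ∈ (univ : Finset (Fin d)).powersetCard k,
      (A.filter fun f => R f = S).card ≤ d ^ k * n ^ (d - k) := by
    intro S hS
    rw [mem_powersetCard] at hS
    -- injection into pointers on S and values off S
    set Φ : (Fin d → Fin n) → ({x // x ∈ S} → Fin d) × ({x // x ∉ S} → Fin n) :=
      fun f => (fun i => minRep f i.1, fun i => f i.1) with hΦ
    have hinj : Set.InjOn Φ (A.filter fun f => R f = S) := by
      intro f hf f' hf' heq
      simp only [coe_filter, Set.mem_setOf_eq] at hf hf'
      have hSf := hf.2
      have hSf' := hf'.2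
      have h1 : ∀ i : Fin d, (hi : i ∈ S) → minRep f i = minRep f' i := by
        intro i hi
        have := congrFun (congrArg Prod.fst heq) ⟨i, hi⟩
        simpa [hΦ] using this
      have h2 : ∀ i : Fin d, i ∉ S → f i = f' i := by
        intro i hi
        have := congrFun (congrArg Prod.snd heq) ⟨i, hi⟩
        simpa [hΦ] using this
      funext i
      by_cases hi : i ∈ S
      · have hjL : minRep f (minRep f i) = minRep f i := minRep_idem f i
        have hjnot : minRep f i ∉ S := by
          rw [← hSf, hR]
          simp [hjL]
        calc f i = f (minRep f i) := (minRep_spec f i).symm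
          _ = f' (minRep f i) := h2 _ hjnot
          _ = f' (minRep f' i) := by rw [h1 i hi]
          _ = f' i := minRep_spec f' i
      · exact h2 i hi
    have := Finset.card_le_card_of_injOn Φ
      (fun f _ => Finset.mem_univ (Φ f)) hinj
    calc (A.filter fun f => R f = S).card
        ≤ (univ : Finset (({x // x ∈ S} → Fin d) × ({x // x ∉ S} → Fin n))).card := this
      _ = d ^ k * n ^ (d - k) := by
          rw [card_univ, Fintype.card_prod, Fintype.card_fun, Fintype.card_fun,
            Fintype.card_fin, Fintype.card_fin, Fintype.card_coe, hS.2]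
          congr 1
          have : Fintype.card {x // x ∉ S} = d - k := by
            have := Fintype.card_subtype_compl (p := fun x => x ∈ S)
            rw [Fintype.card_fin, Fintype.card_coe, hS.2] at this
            simpa using this
          rw [this]
  calc ∑ S ∈ (univ : Finset (Fin d)).powersetCard k,
        (A.filter fun f => R f = S).card
      ≤ ∑ S ∈ (univ : Finset (Fin d)).powersetCard k, d ^ k * n ^ (d - k) :=
        Finset.sum_le_sum hbound
    _ = d.choose k * d ^ k * n ^ (d - k) := by
        rw [Finset.sum_const, Finset.card_powersetCard, card_univ, Fintype.card_fin,
          smul_eq_mul, mul_assoc]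
end
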